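/- Fix the theory K-coding: for each countable X ⊆ 2^ω define a structure M_X whose sort U is A ∪ X with A a fixed countably infinite set disjoint from 2^ω, and where data assigns to each pair (u, c̅) with u ∈ U and c̅ a finite binary string a dimension d(u,c̅) ∈ ℕ, with d(a,c̅) = 1 for a ∈ A and d(x,c̅) = x(|c̅|) + 2 for x ∈ X. Then for countable X, Y ⊆ 2^ω, there is a bijection f : U_X → U_Y with d(u,c̅) = d(f(u),c̅) for all u and c̅ if and only if X = Y. -/
import Mathlib


/-- The dimension function of the coding structure `M_X` for the Koerwien theory: the sort
`U` is `A ∪ X` (with `A` a fixed countably infinite set, here a copy of `ℕ`, disjoint from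
`2^ω`), elements of `A` have dimension `1` on every binary string, and `x ∈ X` has dimension
`x(|c̅|) + 2` on the string `c̅`. -/
def dimFn (X : Set (ℕ → Bool)) : (ℕ ⊕ ↥X) → List Bool → ℕ
  | Sum.inl _, _ => 1
  | Sum.inr x, c => (if x.1 c.length then 1 else 0) + 2

lemma ite_eq_bool {a b : Bool} (h : (if a then 1 else 0) + 2 = (if b then 1 else 0) + 2) :
    a = b := by cases a <;> cases b <;> simp_all

/-- For countable `X, Y ⊆ 2^ω`, there is a dimension-preserving bijection of the sorts
`U_X = A ∪ X` and `U_Y = A ∪ Y` iff `X = Y`. -/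
theorem stmt15 (X Y : Set (ℕ → Bool)) (hX : X.Countable) (hY : Y.Countable) :
    (∃ f : (ℕ ⊕ ↥X) ≃ (ℕ ⊕ ↥Y),
        ∀ (u : ℕ ⊕ ↥X) (c : List Bool), dimFn X u c = dimFn Y (f u) c) ↔ X = Y := by
  constructor
  · rintro ⟨f, hf⟩
    ext z
    constructor
    · intro hz
      rcases hfy : f (Sum.inr ⟨z, hz⟩) with n | y
      · have := hf (Sum.inr ⟨z, hz⟩) []
        rw [hfy] at this
        simp [dimFn] at this
      · have hy : y.1 = z := by
          funext n
          have := hf (Sum.inr ⟨z, hz⟩) (List.replicate n true)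
          rw [hfy] at this
          simp only [dimFn, List.length_replicate] at this
          exact (ite_eq_bool this).symm
        exact hy ▸ y.2
    · intro hz
      rcases hfy : f.symm (Sum.inr ⟨z, hz⟩) with n | x
      · have := hf (Sum.inl n) []
        rw [show (Sum.inl n : ℕ ⊕ ↥X) = f.symm (Sum.inr ⟨z, hz⟩) from hfy.symm,
          f.apply_symm_apply] at this
        rw [hfy] at this
        simp [dimFn] at this
      · have hx : x.1 = z := by
          funext n
          have := hf (Sum.inr x) (List.replicate n true)
          rw [show (Sum.inr x : ℕ ⊕ ↥X) = f.symm (Sum.inr ⟨z, hz⟩) from hfy.symm,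
            f.apply_symm_apply] at this
          rw [hfy] at this
          simp only [dimFn, List.length_replicate] at this
          exact ite_eq_bool this
        exact hx ▸ x.2
  · rintro rfl
    exact ⟨Equiv.refl _, fun u c => rfl⟩
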